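/- (Cruise control invariant is a differential invariant) Let I, v : [0,T] → ℝ be differentiable with I'(s) = (15 − v(s))·40 and v'(s) = ((15 − v(s))·600 + I(s) − v(s)·50)·0.001 for all s ∈ [0,T]. Define V(s) = 1.3·(I(s) − 750)² − 198·(I(s) − 750)·(v(s) − 15) + 12192·(v(s) − 15)². If V(0) ≤ 5542 then V(s) ≤ 5542 for all s ∈ [0,T]. -/

import Mathlib

/-- The quadratic invariant of the PI cruise-control system is a differential
invariant: it is preserved along solutions of the dynamics. -/
theorem cruise_invariant (T : ℝ) (hT : 0 ≤ T) (I v : ℝ → ℝ)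
    (hI : ∀ s ∈ Set.Icc (0:ℝ) T, HasDerivAt I ((15 - v s) * 40) s)
    (hv : ∀ s ∈ Set.Icc (0:ℝ) T,
      HasDerivAt v (((15 - v s) * 600 + I s - v s * 50) * 0.001) s)
    (V : ℝ → ℝ)
    (hV : ∀ s, V s = 1.3 * (I s - 750)^2 - 198 * (I s - 750) * (v s - 15)
      + 12192 * (v s - 15)^2)
    (h0 : V 0 ≤ 5542) :
    ∀ s ∈ Set.Icc (0:ℝ) T, V s ≤ 5542 := by
  have hVfun : V = fun s => 1.3 * (I s - 750)^2 - 198 * (I s - 750) * (v s - 15)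
      + 12192 * (v s - 15)^2 := funext hV
  have hderiv : ∀ s ∈ Set.Icc (0:ℝ) T, HasDerivAt V
      (1.3 * (2 * (I s - 750) * ((15 - v s) * 40))
        - (198 * ((15 - v s) * 40) * (v s - 15)
          + 198 * (I s - 750) * (((15 - v s) * 600 + I s - v s * 50) * 0.001))
        + 12192 * (2 * (v s - 15) * (((15 - v s) * 600 + I s - v s * 50) * 0.001))) s := by
    intro s hs
    rw [hVfun]
    have h1 := (hI s hs).sub_const 750
    have h2 := (hv s hs).sub_const 15
    have t1 := (h1.pow 2).const_mul (1.3 : ℝ)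
    have t2 := (h1.const_mul (198 : ℝ)).mul h2
    have t3 := (h2.pow 2).const_mul (12192 : ℝ)
    have h := (t1.sub t2).add t3
    refine (h.congr_deriv (by ring)).congr_of_eventuallyEq (Filter.Eventually.of_forall fun x => ?_)
    simp only [Pi.add_apply, Pi.sub_apply, Pi.mul_apply, Pi.pow_apply]
  have key : AntitoneOn V (Set.Icc 0 T) := by
    apply antitoneOn_of_deriv_nonpos (convex_Icc 0 T)
    · exact fun s hs => (hderiv s hs).continuousAt.continuousWithinAt
    · intro s hs
      rw [interior_Icc] at hs
      exact (hderiv s (Set.Ioo_subset_Icc_self hs)).differentiableAt.differentiableWithinAt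
    · intro s hs
      rw [interior_Icc] at hs
      rw [(hderiv s (Set.Ioo_subset_Icc_self hs)).deriv]
      nlinarith [sq_nonneg (I s - 750 - 124 * (v s - 15)), sq_nonneg (v s - 15),
        sq_nonneg (I s - 750)]
  intro s hs
  calc V s ≤ V 0 := key (Set.left_mem_Icc.2 hT) hs hs.1
  _ ≤ 5542 := h0
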